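/- Let H ⊆ ℝ be bounded and infinite with exactly one accumulation point, say H' = {h}. Then LAvg(H) exists and LAvg(H) = h. -/

import Mathlib

open Filter Topology MeasureTheory
open scoped ENNReal NNReal

/-- The set of accumulation points of `H`. -/
def accPts (H : Set ℝ) : Set ℝ := {x | AccPt x (𝓟 H)}

/-- `Avg` of a set of reals: the integral of the identity divided by the measure. -/
noncomputable def setAvg (K : Set ℝ) : ℝ := (∫ x in K, x) / (volume K).toReal

/-- Lower bound for the volume of a thickening via separated points. -/
lemma vol_lb_calc (H : Set ℝ) (T : Finset ℝ) (hT : ↑T ⊆ H) {δ : ℝ} (hδ : 0 < δ)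
    (hsep : ∀ x ∈ T, ∀ y ∈ T, x ≠ y → 2 * δ ≤ dist x y) :
    (T.card : ℝ≥0∞) * ENNReal.ofReal (2 * δ) ≤ volume (Metric.thickening δ H) := by
  have hdisj : (T : Set ℝ).PairwiseDisjoint (fun x => Metric.ball x δ) := by
    intro x hx y hy hxy
    exact Metric.ball_disjoint_ball (by linarith [hsep x hx y hy hxy])
  have h1 : volume (⋃ x ∈ T, Metric.ball x δ) = ∑ x ∈ T, volume (Metric.ball x δ) :=
    measure_biUnion_finset hdisj fun _ _ => measurableSet_ball
  calc (T.card : ℝ≥0∞) * ENNReal.ofReal (2 * δ)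
      = ∑ _x ∈ T, ENNReal.ofReal (2 * δ) := by
        rw [Finset.sum_const, nsmul_eq_mul]
    _ = volume (⋃ x ∈ T, Metric.ball x δ) := by
        rw [h1]; exact Finset.sum_congr rfl fun x _ => (Real.volume_ball x δ).symm
    _ ≤ volume (Metric.thickening δ H) := by
        apply measure_mono
        rw [Metric.thickening_eq_biUnion_ball]
        exact Set.biUnion_subset_biUnion_left hT

/-- For every `N` there is `δ₀ > 0` such that for all `0 < δ ≤ δ₀` the thickening of an
infinite set has volume at least `N * 2δ`. -/
lemma vol_lb (H : Set ℝ) (hi : H.Infinite) (N : ℕ) :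
    ∃ δ0 > (0:ℝ), ∀ δ : ℝ, 0 < δ → δ ≤ δ0 →
      (N : ℝ≥0∞) * ENNReal.ofReal (2 * δ) ≤ volume (Metric.thickening δ H) := by
  obtain ⟨T, hTsub, hTcard⟩ := hi.exists_subset_card_eq N
  by_cases hne : T.offDiag.Nonempty
  · refine ⟨T.offDiag.inf' hne (fun p => dist p.1 p.2) / 2, ?_, ?_⟩
    · have : (0:ℝ) < T.offDiag.inf' hne (fun p => dist p.1 p.2) := by
        rw [Finset.lt_inf'_iff]
        intro p hp
        exact dist_pos.2 (Finset.mem_offDiag.1 hp).2.2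
      linarith
    · intro δ hδ hδ0
      rw [← hTcard]
      apply vol_lb_calc H T hTsub hδ
      intro x hx y hy hxy
      have hle := Finset.inf'_le (fun p : ℝ × ℝ => dist p.1 p.2)
        (b := (x, y)) (Finset.mem_offDiag.2 ⟨hx, hy, hxy⟩)
      linarith
  · refine ⟨1, one_pos, fun δ hδ _ => ?_⟩
    rw [← hTcard]
    apply vol_lb_calc H T hTsub hδ
    intro x hx y hy hxy
    exact absurd ⟨⟨x, y⟩, Finset.mem_offDiag.2 ⟨hx, hy, hxy⟩⟩ hne

/-- Outside any ball around the unique accumulation point, a bounded set is finite. -/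
lemma far_finite (H : Set ℝ) (hbd : Bornology.IsBounded H) (h : ℝ)
    (hacc : accPts H = {h}) {ε : ℝ} (hε : 0 < ε) :
    (H \ Metric.ball h ε).Finite := by
  by_contra hinf
  have hinf : (H \ Metric.ball h ε).Infinite := hinf
  obtain ⟨r, hr⟩ := hbd.subset_closedBall h
  obtain ⟨x, -, hx⟩ := hinf.exists_accPt_of_subset_isCompact
    (ProperSpace.isCompact_closedBall h r) ((Set.diff_subset).trans hr)
  have hxH : AccPt x (𝓟 H) := hx.mono (principal_mono.2 Set.diff_subset)
  have hxh : x = h := by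
    have : x ∈ accPts H := hxH
    rw [hacc] at this
    exact this
  subst hxh
  obtain ⟨y, hy, -⟩ := accPt_iff_nhds.1 hx (Metric.ball x ε) (Metric.ball_mem_nhds x hε)
  exact hy.2.2 hy.1

/-- if a bounded infinite `H ⊆ ℝ` has exactly one accumulation
point `h`, then `LAvg(H)` exists and equals `h`. -/
theorem lavg_of_single_accPt (H : Set ℝ) (hbd : Bornology.IsBounded H)
    (hi : H.Infinite) (h : ℝ) (hacc : accPts H = {h}) :
    Tendsto (fun δ : ℝ => setAvg (Metric.thickening δ H)) (𝓝[>] 0) (𝓝 h) := by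
  rw [Metric.tendsto_nhdsWithin_nhds]
  intro ε hε
  -- bound on H
  obtain ⟨r, hr⟩ := hbd.subset_closedBall h
  set R : ℝ := max r 0 with hRdef
  have hR0 : 0 ≤ R := le_max_right r 0
  have hHR : ∀ x ∈ H, dist x h ≤ R := fun x hx => (hr hx).trans (le_max_left r 0)
  -- the far set
  have hF : (H \ Metric.ball h (ε/4)).Finite := far_finite H hbd h hacc (by linarith)
  set n : ℕ := hF.toFinset.card with hndef
  -- choose N
  obtain ⟨N, hN⟩ := exists_nat_gt ((R+1) * n * 4 / ε)
  have hNpos : (0:ℝ) < N := lt_of_le_of_lt (by positivity) hN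
  -- choose δ0
  obtain ⟨δ0, hδ0pos, hδ0⟩ := vol_lb H hi N
  refine ⟨min δ0 (min 1 (ε/4)), by positivity, ?_⟩
  intro δ hδmem hδdist
  have hδ : (0:ℝ) < δ := hδmem
  rw [Real.dist_eq, sub_zero, abs_of_pos hδ] at hδdist
  have hδδ0 : δ ≤ δ0 := le_of_lt (lt_of_lt_of_le hδdist (min_le_left _ _))
  have hδ1 : δ ≤ 1 := le_of_lt (lt_of_lt_of_le hδdist ((min_le_right _ _).trans (min_le_left _ _)))
  have hδε : δ ≤ ε/4 := le_of_lt (lt_of_lt_of_le hδdist ((min_le_right _ _).trans (min_le_right _ _)))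
  set S := Metric.thickening δ H with hSdef
  have hSmeas : MeasurableSet S := Metric.isOpen_thickening.measurableSet
  have hSsub : S ⊆ Metric.closedBall h (R + 1) := by
    intro y hy
    rw [Metric.mem_thickening_iff] at hy
    obtain ⟨x, hxH, hxy⟩ := hy
    have h1 := hHR x hxH
    rw [Metric.mem_closedBall]
    calc dist y h ≤ dist y x + dist x h := dist_triangle y x h
      _ ≤ R + 1 := by linarith
  have hVtop : volume S < ⊤ :=
    lt_of_le_of_lt (measure_mono hSsub) (measure_closedBall_lt_top)
  have hVlb : (N : ℝ≥0∞) * ENNReal.ofReal (2*δ) ≤ volume S := hδ0 δ hδ hδδ0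
  set V : ℝ := (volume S).toReal with hVdef
  have hVlbR : (N:ℝ) * (2*δ) ≤ V := by
    have h2 := ENNReal.toReal_mono hVtop.ne hVlb
    rwa [ENNReal.toReal_mul, ENNReal.toReal_ofReal (by linarith), ENNReal.toReal_natCast] at h2
  have hVpos : 0 < V := lt_of_lt_of_le (by positivity) hVlbR
  -- the near/far decomposition
  set A := Metric.thickening δ (H ∩ Metric.ball h (ε/4)) with hAdef
  set B := Metric.thickening δ (H \ Metric.ball h (ε/4)) with hBdef
  have hAmeas : MeasurableSet A := Metric.isOpen_thickening.measurableSet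
  have hBmeas : MeasurableSet B := Metric.isOpen_thickening.measurableSet
  have hAS : A ⊆ S := Metric.thickening_subset_of_subset δ Set.inter_subset_left
  have hBS : B ⊆ S := Metric.thickening_subset_of_subset δ Set.diff_subset
  have hS_eq : S = A ∪ (B \ A) := by
    rw [hSdef, hAdef, hBdef, Set.union_diff_self, ← Metric.thickening_union,
      Set.inter_union_diff]
  -- integrability
  have hintS : IntegrableOn (fun x => x - h) S volume := by
    apply Measure.integrableOn_of_bounded hVtop.ne
      ((measurable_id.sub_const h).aestronglyMeasurable) (M := R + 1)
    rw [ae_restrict_iff' hSmeas]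
    filter_upwards with a ha
    have h3 := hSsub ha
    rw [Metric.mem_closedBall, Real.dist_eq] at h3
    simpa [Real.norm_eq_abs] using h3
  have hintA : IntegrableOn (fun x => x - h) A volume := hintS.mono_set hAS
  have hintBA : IntegrableOn (fun x => x - h) (B \ A) volume :=
    hintS.mono_set ((Set.diff_subset).trans hBS)
  -- split the integral
  have hsplit : ∫ x in S, (x - h) = (∫ x in A, (x - h)) + ∫ x in B \ A, (x - h) := by
    rw [hS_eq]
    exact setIntegral_union (Set.disjoint_sdiff_right) (hBmeas.diff hAmeas) hintA hintBA
  -- bound near part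
  have hbA : ‖∫ x in A, (x - h)‖ ≤ (ε/4 + δ) * (volume A).toReal := by
    apply norm_setIntegral_le_of_norm_le_const_ae' (lt_of_le_of_lt (measure_mono hAS) hVtop)
    filter_upwards with x hx
    rw [Metric.mem_thickening_iff] at hx
    obtain ⟨y, ⟨-, hyb⟩, hxy⟩ := hx
    rw [Metric.mem_ball, Real.dist_eq] at hyb
    rw [Real.dist_eq] at hxy
    rw [Real.norm_eq_abs]
    have := abs_sub_abs_le_abs_sub (x - h) (x - y)
    have h4 : |x - h| ≤ |x - y| + |y - h| := by
      calc |x - h| = |(x - y) + (y - h)| := by ring_nf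
        _ ≤ |x - y| + |y - h| := abs_add_le _ _
    linarith
  -- bound far part
  have hbB : ‖∫ x in B \ A, (x - h)‖ ≤ (R + 1) * (volume (B \ A)).toReal := by
    apply norm_setIntegral_le_of_norm_le_const_ae'
      (lt_of_le_of_lt (measure_mono ((Set.diff_subset).trans hBS)) hVtop)
    filter_upwards with x hx
    have h3 := hSsub (hBS hx.1)
    rw [Metric.mem_closedBall, Real.dist_eq] at h3
    simpa [Real.norm_eq_abs] using h3
  -- bound the far volume
  have hvolB : (volume (B \ A)).toReal ≤ (n:ℝ) * (2*δ) := by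
    have h5 : volume B ≤ (n : ℝ≥0∞) * ENNReal.ofReal (2*δ) := by
      have hBsub : B ⊆ ⋃ x ∈ hF.toFinset, Metric.ball x δ := by
        rw [hBdef, Metric.thickening_eq_biUnion_ball]
        intro y hy
        simp only [Set.mem_iUnion, exists_prop] at hy ⊢
        obtain ⟨x, hx, hxy⟩ := hy
        exact ⟨x, hF.mem_toFinset.2 hx, hxy⟩
      calc volume B
          ≤ volume (⋃ x ∈ hF.toFinset, Metric.ball x δ) := measure_mono hBsub
        _
          ≤ ∑ x ∈ hF.toFinset, volume (Metric.ball x δ) :=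
            measure_biUnion_finset_le _ _
        _ = (n : ℝ≥0∞) * ENNReal.ofReal (2*δ) := by
            rw [Finset.sum_congr rfl fun x _ => Real.volume_ball x δ, Finset.sum_const,
              nsmul_eq_mul, hndef]
    have h6 : volume (B \ A) ≤ (n : ℝ≥0∞) * ENNReal.ofReal (2*δ) :=
      (measure_mono Set.diff_subset).trans h5
    have h7 := ENNReal.toReal_mono (by finiteness) h6
    rwa [ENNReal.toReal_mul, ENNReal.toReal_ofReal (by linarith), ENNReal.toReal_natCast] at h7
  -- combine
  have hvolA : (volume A).toReal ≤ V := by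
    apply ENNReal.toReal_mono hVtop.ne (measure_mono hAS)
  have key : ‖∫ x in S, (x - h)‖ ≤ (ε/4 + δ) * V + (R + 1) * ((n:ℝ) * (2*δ)) := by
    rw [hsplit]
    have h8 : (ε/4 + δ) * (volume A).toReal ≤ (ε/4 + δ) * V := by
      apply mul_le_mul_of_nonneg_left hvolA (by linarith)
    have h9 : (R + 1) * (volume (B \ A)).toReal ≤ (R + 1) * ((n:ℝ) * (2*δ)) := by
      apply mul_le_mul_of_nonneg_left hvolB (by linarith)
    calc ‖(∫ x in A, (x - h)) + ∫ x in B \ A, (x - h)‖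
        ≤ ‖∫ x in A, (x - h)‖ + ‖∫ x in B \ A, (x - h)‖ := norm_add_le _ _
      _ ≤ (ε/4 + δ) * V + (R + 1) * ((n:ℝ) * (2*δ)) := by linarith
  -- identify setAvg - h
  have hconst : IntegrableOn (fun _ : ℝ => h) S volume := integrableOn_const hVtop.ne
  have hid : IntegrableOn (fun x => x) S volume := by
    have h10 := hintS.add hconst
    have h11 : ((fun x => x - h) + fun _ => h) = fun x : ℝ => x := by
      funext x; simp
    rwa [h11] at h10
  have hsub_eq : ∫ x in S, (x - h) = (∫ x in S, x) - V * h := by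
    rw [integral_sub hid hconst, setIntegral_const, smul_eq_mul]; rfl
  have havg : setAvg S - h = (∫ x in S, (x - h)) / V := by
    rw [setAvg, hsub_eq, ← hVdef]
    field_simp
  -- final estimate
  rw [Real.dist_eq, havg, abs_div, abs_of_pos hVpos, div_lt_iff₀ hVpos]
  have hfar : (R + 1) * ((n:ℝ) * (2*δ)) < (ε/4) * V := by
    have h11 : (R+1) * n * 4 < N * ε := by
      rw [div_lt_iff₀ hε] at hN
      linarith
    have h13 : (ε/4) * ((N:ℝ) * (2*δ)) ≤ (ε/4) * V :=
      mul_le_mul_of_nonneg_left hVlbR (by linarith)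
    have h14 := mul_lt_mul_of_pos_right h11 hδ
    nlinarith [h13, h14]
  calc |∫ x in S, (x - h)| ≤ (ε/4 + δ) * V + (R + 1) * ((n:ℝ) * (2*δ)) := by
        rwa [Real.norm_eq_abs] at key
    _ < (ε/4 + δ) * V + (ε/4) * V := by linarith
    _ ≤ ε * V := by nlinarith
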